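/- Let A ⊆ ω and let f_A : ω → ω be strictly increasing with A ≡_T f_A such that every g dominating f_A computes A. Define R = {x ∈ (ω)^3 : f_A(μ^x(1)) ≤ μ^x(2)}. Then: (a) R and its complement are open and A-computable; (b) every p ∈ (ω)^ω homogeneous for the coloring (ω)^3 = R ∪ ¬R satisfies (p)^3 ⊆ R; and (c) every such homogeneous p computes A. -/

import Mathlib

open Set

/-- `f : ℕ → ℕ` is ordered: a value `i` can occur only after all `j < i` have occurred. -/
def IsOrderedFn (f : ℕ → ℕ) : Prop :=
  ∀ n i, f n = i → ∀ j < i, ∃ m < n, f m = j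

/-- `(ω)^k`: ordered surjections from `ω` onto `k`. -/
def OmegaPart (k : ℕ) : Set (ℕ → ℕ) :=
  {f | IsOrderedFn f ∧ (∀ n, f n < k) ∧ ∀ i < k, ∃ n, f n = i}

/-- `(ω)^ω`: ordered surjections from `ω` onto `ω` (infinite partitions). -/
def OmegaPartInf : Set (ℕ → ℕ) :=
  {f | IsOrderedFn f ∧ Function.Surjective f}

/-- `(p)^k`: the `k`-coarsenings of `p`. -/
def Coarsenings (p : ℕ → ℕ) (k : ℕ) : Set (ℕ → ℕ) :=
  {q | q ∈ OmegaPart k ∧ ∀ n m, p n = p m → q n = q m}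

/-- `(p)^ω`: the infinite coarsenings of `p`. -/
def CoarseningsInf (p : ℕ → ℕ) : Set (ℕ → ℕ) :=
  {q | q ∈ OmegaPartInf ∧ ∀ n m, p n = p m → q n = q m}

/-- `μ^x(i)`: the least `n` with `x n = i`. -/
noncomputable def mu (x : ℕ → ℕ) (i : ℕ) : ℕ := sInf {n | x n = i}

/-- `x ↾ n` as a finite string. -/
def restrictList (x : ℕ → ℕ) (n : ℕ) : List ℕ := (List.range n).map x

/-- The basic (cylinder) set `[σ]` of functions extending the finite string `σ`. -/
def Cyl (σ : List ℕ) : Set (ℕ → ℕ) := {x | ∀ n < σ.length, x n = σ.getD n 0}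

/-- A finite string is ordered. -/
def ListOrdered (σ : List ℕ) : Prop :=
  ∀ n < σ.length, ∀ j < σ.getD n 0, ∃ m < n, σ.getD m 0 = j

/-- `(ω)^k_fin`: ordered finite strings over `k` in which all `i < k` appear. -/
def OmegaPartFin (k : ℕ) : Set (List ℕ) :=
  {σ | ListOrdered σ ∧ (∀ a ∈ σ, a < k) ∧ ∀ i < k, i ∈ σ}

/-- Composition `σ ∘ τ` of finite strings: `(σ ∘ τ)(n) = σ(τ(n))`. -/
def listComp (σ τ : List ℕ) : List ℕ := τ.map fun n => σ.getD n 0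

/-- `σ'` is a `k`-coarsening of the finite string `τ`. -/
def IsListCoarsening (k : ℕ) (σ' τ : List ℕ) : Prop :=
  σ' ∈ OmegaPartFin k ∧ σ'.length = τ.length ∧
    ∀ n < τ.length, ∀ m < τ.length,
      τ.getD n 0 = τ.getD m 0 → σ'.getD n 0 = σ'.getD m 0

/-- The open set coded by a set `W` of finite strings. -/
def OpenFrom (W : Set (List ℕ)) : Set (ℕ → ℕ) := {x | ∃ σ ∈ W, x ∈ Cyl σ}

/-- Codes for partial recursive functionals with an oracle. -/
inductive OracleCode : Type
  | oracle : OracleCode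
  | zero : OracleCode
  | succ : OracleCode
  | left : OracleCode
  | right : OracleCode
  | pair : OracleCode → OracleCode → OracleCode
  | comp : OracleCode → OracleCode → OracleCode
  | prec : OracleCode → OracleCode → OracleCode
  | rfind' : OracleCode → OracleCode

/-- Evaluation of an oracle code with oracle `g`. -/
def OracleCode.evalo (g : ℕ →. ℕ) : OracleCode → ℕ →. ℕ
  | .oracle => g
  | .zero => fun _ => Part.some 0
  | .succ => fun n => Part.some (n + 1)
  | .left => fun n => Part.some (Nat.unpair n).1
  | .right => fun n => Part.some (Nat.unpair n).2
  | .pair cf cg => fun n => Nat.pair <$> OracleCode.evalo g cf n <*> OracleCode.evalo g cg n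
  | .comp cf cg => fun n => OracleCode.evalo g cg n >>= OracleCode.evalo g cf
  | .prec cf cg =>
      Nat.unpaired fun a n =>
        n.rec (OracleCode.evalo g cf a) fun y IH => do
          let i ← IH
          OracleCode.evalo g cg (Nat.pair a (Nat.pair y i))
  | .rfind' cf =>
      Nat.unpaired fun a m =>
        (Nat.rfind fun n =>
            (fun x => decide (x = 0)) <$> OracleCode.evalo g cf (Nat.pair a (n + m))).map (· + m)

/-- View a total function as a partial function. -/
def toP (f : ℕ → ℕ) : ℕ →. ℕ := fun n => Part.some (f n)

/-- `f` is Turing reducible to `g`. -/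
def TuringReducibleFun (f g : ℕ → ℕ) : Prop :=
  ∃ c : OracleCode, c.evalo (toP g) = toP f

open Classical in
/-- Characteristic function of a set of naturals. -/
noncomputable def chi (A : Set ℕ) : ℕ → ℕ := fun n => if n ∈ A then 1 else 0

/-- A numbering of oracle codes. -/
def OracleCode.encodeC : OracleCode → ℕ
  | .oracle => 0
  | .zero => 1
  | .succ => 2
  | .left => 3
  | .right => 4
  | .pair a b => Nat.pair a.encodeC b.encodeC * 4 + 5
  | .comp a b => Nat.pair a.encodeC b.encodeC * 4 + 6
  | .prec a b => Nat.pair a.encodeC b.encodeC * 4 + 7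
  | .rfind' a => a.encodeC * 4 + 8

/-- The Turing jump of (the characteristic function) `g`. -/
def JumpSet (g : ℕ → ℕ) : Set ℕ :=
  {n | ∃ c : OracleCode, ∃ m, n = Nat.pair c.encodeC m ∧ (c.evalo (toP g) m).Dom}

/-- `∅^{(n)}`: the iterated Turing jump of the empty set. -/
noncomputable def EmptyIter : ℕ → Set ℕ
  | 0 => (∅ : Set ℕ)
  | n + 1 => JumpSet (chi (EmptyIter n))

/-- The clopen set coded by the leaf label `e`: `∅`, `univ`, `[τ_m]`, or its complement. -/
def leafSet (e : ℕ) : Set (ℕ → ℕ) :=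
  if e = 0 then ∅
  else if e = 1 then Set.univ
  else if e % 2 = 0 then Cyl (Denumerable.ofNat (List ℕ) (e / 2 - 1))
  else (Cyl (Denumerable.ofNat (List ℕ) (e / 2 - 1)))ᶜ

/-- Evaluation of a normal-form Borel code of height `m` (alternating ∃/∀ over the
labelling function `f` on tuples, `true` for Σ, `false` for Π). -/
def NFEval : ℕ → Bool → (List ℕ → ℕ) → (ℕ → ℕ) → Prop
  | 0, _, f, x => x ∈ leafSet (f [])
  | m + 1, true, f, x => ∃ t, NFEval m false (fun l => f (t :: l)) x
  | m + 1, false, f, x => ∀ t, NFEval m true (fun l => f (t :: l)) x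

/-- The coloring `R = {x ∈ (ω)^3 : f_A(μ^x(1)) ≤ μ^x(2)}`. -/
def Rset (fA : ℕ → ℕ) : Set (ℕ → ℕ) := {x ∈ OmegaPart 3 | fA (mu x 1) ≤ mu x 2}

section Aux

/-! ### mu lemmas -/

lemma mu_spec {x : ℕ → ℕ} {i : ℕ} (h : ∃ n, x n = i) : x (mu x i) = i :=
  Nat.sInf_mem h

lemma mu_le {x : ℕ → ℕ} {i n : ℕ} (h : x n = i) : mu x i ≤ n := Nat.sInf_le h

lemma mu_min {x : ℕ → ℕ} {i m : ℕ} (h : m < mu x i) : x m ≠ i :=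
  fun hc => absurd (mu_le hc) (by omega)

lemma mu_eq_of {x : ℕ → ℕ} {i t : ℕ} (h1 : x t = i) (h2 : ∀ m < t, x m ≠ i) :
    mu x i = t :=
  le_antisymm (mu_le h1) (le_of_not_gt fun h => h2 _ h (mu_spec ⟨t, h1⟩))

lemma mu_lt_mu {x : ℕ → ℕ} (hx : IsOrderedFn x) {i j : ℕ} (hi : ∃ n, x n = i)
    (hj : j < i) : mu x j < mu x i := by
  obtain ⟨m, hm, hmj⟩ := hx (mu x i) i (mu_spec hi) j hj
  exact lt_of_le_of_lt (mu_le hmj) hm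

lemma le_mu {x : ℕ → ℕ} (hx : IsOrderedFn x) (hs : Function.Surjective x) (i : ℕ) :
    i ≤ mu x i := by
  induction i with
  | zero => exact Nat.zero_le _
  | succ k ih => exact Nat.lt_of_le_of_lt ih (mu_lt_mu hx (hs (k + 1)) (Nat.lt_succ_self k))

/-! ### the coarsening family -/

lemma coarsen_mem {p : ℕ → ℕ} (hp : p ∈ OmegaPartInf) {a b : ℕ} (ha : 1 ≤ a) (hab : a < b) :
    (fun m => if p m < a then 0 else if p m < b then 1 else 2) ∈ Coarsenings p 3 ∧
    mu (fun m => if p m < a then 0 else if p m < b then 1 else 2) 1 = mu p a ∧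
    mu (fun m => if p m < a then 0 else if p m < b then 1 else 2) 2 = mu p b := by
  obtain ⟨hord, hsurj⟩ := hp
  set z : ℕ → ℕ := fun m => if p m < a then 0 else if p m < b then 1 else 2 with hzdef
  have hz : ∀ m, z m = if p m < a then 0 else if p m < b then 1 else 2 := fun _ => rfl
  have hz1 : z (mu p a) = 1 := by
    rw [hz, mu_spec (hsurj a), if_neg (lt_irrefl a), if_pos hab]
  have hz2 : z (mu p b) = 2 := by
    rw [hz, mu_spec (hsurj b), if_neg (by omega), if_neg (lt_irrefl b)]
  have hmin1 : ∀ m < mu p a, z m ≠ 1 := by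
    intro m hm hc
    rw [hz] at hc
    split_ifs at hc with h1 h2
    all_goals try omega
    have hpa : a < p m := lt_of_le_of_ne (not_lt.1 h1) fun h => (mu_min hm) h.symm
    obtain ⟨m', hm', hpm'⟩ := hord m (p m) rfl a hpa
    exact mu_min (hm'.trans hm) hpm'
  have hmin2 : ∀ m < mu p b, z m ≠ 2 := by
    intro m hm hc
    rw [hz] at hc
    split_ifs at hc with h1 h2
    all_goals try omega
    have hpb : b < p m := lt_of_le_of_ne (not_lt.1 h2) fun h => (mu_min hm) h.symm
    obtain ⟨m', hm', hpm'⟩ := hord m (p m) rfl b hpb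
    exact mu_min (hm'.trans hm) hpm'
  refine ⟨⟨⟨?_, ?_, ?_⟩, ?_⟩, mu_eq_of hz1 hmin1, mu_eq_of hz2 hmin2⟩
  · -- ordered
    intro n i hi j hj
    subst hi
    rw [hz] at hj
    split_ifs at hj with h1 h2
    · omega
    · -- z n = 1, so j = 0
      have hj0 : j = 0 := by omega
      subst hj0
      obtain ⟨m, hm, hpm⟩ := hord n (p n) rfl 0 (by omega)
      exact ⟨m, hm, by rw [hz, if_pos (by omega)]⟩
    · -- z n = 2, j = 0 or 1
      interval_cases j
      · obtain ⟨m, hm, hpm⟩ := hord n (p n) rfl 0 (by omega)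
        exact ⟨m, hm, by rw [hz, if_pos (by omega)]⟩
      · obtain ⟨m, hm, hpm⟩ := hord n (p n) rfl a (by omega)
        exact ⟨m, hm, by rw [hz, hpm, if_neg (lt_irrefl a), if_pos hab]⟩
  · intro n; rw [hz]; split_ifs <;> omega
  · intro i hi
    interval_cases i
    · obtain ⟨n, hn⟩ := hsurj 0
      exact ⟨n, by rw [hz, hn, if_pos (by omega)]⟩
    · exact ⟨mu p a, hz1⟩
    · exact ⟨mu p b, hz2⟩
  · intro n m hnm; rw [hz, hz, hnm]

end Aux
/-! ### part (b): an R-coarsening always exists -/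

lemma exists_R_coarsening (fA : ℕ → ℕ) {p : ℕ → ℕ} (hp : p ∈ OmegaPartInf) :
    ∃ z ∈ Coarsenings p 3, z ∈ Rset fA := by
  set N := max (fA (mu p 1)) 1 with hN
  obtain ⟨hc, h1, h2⟩ := coarsen_mem hp (a := 1) (b := N + 1) le_rfl (by omega)
  refine ⟨_, hc, hc.1, ?_⟩
  rw [h1, h2]
  have := le_mu hp.1 hp.2 (N + 1)
  omega

lemma homog_R {fA : ℕ → ℕ} {p : ℕ → ℕ} (hp : p ∈ OmegaPartInf)
    (hom : Coarsenings p 3 ⊆ Rset fA ∨ Coarsenings p 3 ⊆ OmegaPart 3 \ Rset fA) :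
    Coarsenings p 3 ⊆ Rset fA := by
  rcases hom with h | h
  · exact h
  · obtain ⟨z, hz, hzR⟩ := exists_R_coarsening fA hp
    exact fun q _ => ((h hz).2 hzR).elim

lemma dominates {fA : ℕ → ℕ} (hmono : StrictMono fA) {p : ℕ → ℕ} (hp : p ∈ OmegaPartInf)
    (hR : Coarsenings p 3 ⊆ Rset fA) (n : ℕ) : fA n ≤ mu p (n + 2) := by
  obtain ⟨hc, h1, h2⟩ := coarsen_mem hp (a := n + 1) (b := n + 2) (by omega) (by omega)
  have := (hR hc).2
  rw [h1, h2] at this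
  calc fA n ≤ fA (mu p (n + 1)) :=
        hmono.monotone (le_trans (by omega) (le_mu hp.1 hp.2 (n + 1)))
    _ ≤ mu p (n + 2) := this

/-! ### computability infrastructure -/

/-- Translation of ordinary codes into oracle codes. -/
def transl : Nat.Partrec.Code → OracleCode
  | .zero => .zero
  | .succ => .succ
  | .left => .left
  | .right => .right
  | .pair a b => .pair (transl a) (transl b)
  | .comp a b => .comp (transl a) (transl b)
  | .prec a b => .prec (transl a) (transl b)
  | .rfind' a => .rfind' (transl a)

lemma transl_eval (g : ℕ →. ℕ) : ∀ c : Nat.Partrec.Code, (transl c).evalo g = c.eval := by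
  intro c
  induction c with
  | zero => rfl
  | succ => rfl
  | left => rfl
  | right => rfl
  | pair a b iha ihb => simp [transl, OracleCode.evalo, Nat.Partrec.Code.eval, iha, ihb]; rfl
  | comp a b iha ihb => simp [transl, OracleCode.evalo, Nat.Partrec.Code.eval, iha, ihb]; rfl
  | prec a b iha ihb => simp [transl, OracleCode.evalo, Nat.Partrec.Code.eval, iha, ihb]; rfl
  | rfind' a iha => simp [transl, OracleCode.evalo, Nat.Partrec.Code.eval, iha]; rfl

lemma computable_TR {f : ℕ → ℕ} (hf : Computable f) (g : ℕ → ℕ) : TuringReducibleFun f g := by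
  obtain ⟨c, hc⟩ := Nat.Partrec.Code.exists_code.1 (Partrec.nat_iff.1 hf)
  exact ⟨transl c, by rw [transl_eval, hc]; rfl⟩

/-- Substituting a code for the oracle. -/
def osubst (o : OracleCode) : OracleCode → OracleCode
  | .oracle => o
  | .zero => .zero
  | .succ => .succ
  | .left => .left
  | .right => .right
  | .pair a b => .pair (osubst o a) (osubst o b)
  | .comp a b => .comp (osubst o a) (osubst o b)
  | .prec a b => .prec (osubst o a) (osubst o b)
  | .rfind' a => .rfind' (osubst o a)

lemma osubst_eval (g : ℕ →. ℕ) (o : OracleCode) :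
    ∀ c : OracleCode, (osubst o c).evalo g = c.evalo (o.evalo g) := by
  intro c
  induction c with
  | oracle => rfl
  | zero => rfl
  | succ => rfl
  | left => rfl
  | right => rfl
  | pair a b iha ihb => simp [osubst, OracleCode.evalo, iha, ihb]; rfl
  | comp a b iha ihb => simp [osubst, OracleCode.evalo, iha, ihb]; rfl
  | prec a b iha ihb => simp [osubst, OracleCode.evalo, iha, ihb]; rfl
  | rfind' a iha => simp [osubst, OracleCode.evalo, iha]; rfl

lemma TR_trans {f g h : ℕ → ℕ} (h1 : TuringReducibleFun f g) (h2 : TuringReducibleFun g h) :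
    TuringReducibleFun f h := by
  obtain ⟨c1, hc1⟩ := h1
  obtain ⟨c2, hc2⟩ := h2
  exact ⟨osubst c2 c1, by rw [osubst_eval, hc2, hc1]⟩
/-! ### computing `mu p (· + 2)` from `p` -/

lemma mu_code {p : ℕ → ℕ} (hsurj : Function.Surjective p) :
    TuringReducibleFun (fun n => mu p (n + 2)) p := by
  classical
  have hG : Computable (fun m : ℕ => if m.unpair.1 = m.unpair.2 + 2 then 0 else 1) := by
    have h1 : Primrec fun m : ℕ => m.unpair.1 := Primrec.fst.comp Primrec.unpair
    have h2 : Primrec fun m : ℕ => m.unpair.2 + 2 :=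
      Primrec.succ.comp (Primrec.succ.comp (Primrec.snd.comp Primrec.unpair))
    exact (Primrec.ite (Primrec.eq.comp h1 h2) (Primrec.const 0) (Primrec.const 1)).to_comp
  obtain ⟨cG, hcG⟩ := computable_TR hG p
  set cf : OracleCode := .comp cG (.pair (.comp .oracle .right) .left) with hcfdef
  have hcf : ∀ n k : ℕ, cf.evalo (toP p) (Nat.pair n k) =
      Part.some (if p k = n + 2 then 0 else 1) := by
    intro n k
    simp [hcfdef, OracleCode.evalo, hcG, toP, Seq.seq, Nat.unpair_pair]
    unfold toP
    simp [Part.bind_eq_bind]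
  refine ⟨.comp (.rfind' cf) (.pair (.pair .left .right) .zero), ?_⟩
  funext n
  have hpair : (OracleCode.pair (.pair .left .right) .zero).evalo (toP p) n =
      Part.some (Nat.pair n 0) := by
    simp [OracleCode.evalo, Seq.seq, Nat.pair_unpair]
  show ((OracleCode.pair (.pair .left .right) .zero).evalo (toP p) n).bind
      ((OracleCode.rfind' cf).evalo (toP p)) = _
  erw [hpair, Part.bind_some]
  show (Nat.unpaired fun a m =>
      (Nat.rfind fun k => (fun x => decide (x = 0)) <$> cf.evalo (toP p) (Nat.pair a (k + m))).map
        (· + m)) (Nat.pair n 0) = _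
  rw [Nat.unpaired, Nat.unpair_pair]
  have hmem : mu p (n + 2) ∈ Nat.rfind
      (fun k => (fun x => decide (x = 0)) <$> cf.evalo (toP p) (Nat.pair n (k + 0))) := by
    erw [Nat.mem_rfind]
    constructor
    · simp [hcf, mu_spec (hsurj (n + 2))]
    · intro m hm
      simp [hcf, mu_min hm]
  rw [Part.eq_some_iff.2 hmem]
  simp [toP]

/-! ### building the `h` for part (a) -/

lemma TR_build {fA : ℕ → ℕ} {A : Set ℕ} (hfA : TuringReducibleFun fA (chi A))
    {g1 g2 F : ℕ → ℕ} (h1 : Computable g1) (h2 : Computable g2) (hF : Computable F) :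
    TuringReducibleFun (fun n => F (Nat.pair (fA (g1 n)) (g2 n))) (chi A) := by
  obtain ⟨cA, hcA⟩ := hfA
  obtain ⟨c1, hc1⟩ := computable_TR h1 (chi A)
  obtain ⟨c2, hc2⟩ := computable_TR h2 (chi A)
  obtain ⟨cF, hcF⟩ := computable_TR hF (chi A)
  refine ⟨.comp cF (.pair (.comp cA c1) c2), ?_⟩
  funext n
  simp [OracleCode.evalo, hc1, hc2, hcA, hcF, toP, Seq.seq]
  unfold toP
  simp [Part.bind_eq_bind]
/-! ### cylinders and prefixes -/

lemma restrict_length (x : ℕ → ℕ) (n : ℕ) : (restrictList x n).length = n := by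
  simp [restrictList]

lemma restrict_getD {x : ℕ → ℕ} {n m : ℕ} (h : m < n) :
    (restrictList x n).getD m 0 = x m := by
  rw [List.getD_eq_getElem _ _ (by simpa [restrictList] using h)]
  simp [restrictList]

lemma mem_cyl_restrict (x : ℕ → ℕ) (n : ℕ) : x ∈ Cyl (restrictList x n) := by
  intro m hm
  rw [restrict_getD (by simpa [restrict_length] using hm)]

lemma mu_eq_indexOf {x : ℕ → ℕ} {σ : List ℕ} (hx : x ∈ Cyl σ) {i : ℕ}
    (h : σ.idxOf i < σ.length) : mu x i = σ.idxOf i := by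
  have hxi : x (σ.idxOf i) = i := by
    rw [hx _ h, List.getD_eq_getElem _ _ h]
    exact List.getElem_idxOf h
  refine mu_eq_of hxi ?_
  intro m hm hc
  have hm' : m < σ.length := hm.trans h
  have hne : σ[m] ≠ i := by
    have := List.not_of_lt_findIdx (p := (· == i)) (xs := σ) (i := m) hm
    simpa using this
  apply hne
  rw [← hc, hx _ hm', List.getD_eq_getElem _ _ hm']

lemma mem_of_mu_lt {x : ℕ → ℕ} {i n : ℕ} (hex : ∃ m, x m = i) (h : mu x i < n) :
    i ∈ restrictList x n := by
  have : (restrictList x n)[mu x i]'(by simpa [restrict_length] using h) = i := by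
    have := restrict_getD (x := x) h
    rw [List.getD_eq_getElem _ _ (by simpa [restrict_length] using h)] at this
    rw [this, mu_spec hex]
  exact this ▸ List.getElem_mem _

/-! ### the open-set characterization -/

lemma open_char (Q : ℕ → ℕ → Prop) :
    {x | x ∈ OmegaPart 3 ∧ Q (mu x 1) (mu x 2)} =
      OpenFrom {σ | σ.idxOf 1 < σ.length ∧ σ.idxOf 2 < σ.length ∧
        Q (σ.idxOf 1) (σ.idxOf 2)} ∩ OmegaPart 3 := by
  ext x
  constructor
  · rintro ⟨hx3, hQ⟩
    refine ⟨?_, hx3⟩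
    set n := max (mu x 1) (mu x 2) + 1 with hn
    set σ := restrictList x n with hσ
    have hcyl : x ∈ Cyl σ := mem_cyl_restrict x n
    have h1 : σ.idxOf 1 < σ.length := by
      rw [List.idxOf_lt_length_iff]
      exact mem_of_mu_lt (hx3.2.2 1 (by omega)) (by omega)
    have h2 : σ.idxOf 2 < σ.length := by
      rw [List.idxOf_lt_length_iff]
      exact mem_of_mu_lt (hx3.2.2 2 (by omega)) (by omega)
    have e1 := mu_eq_indexOf hcyl h1
    have e2 := mu_eq_indexOf hcyl h2
    exact ⟨σ, ⟨h1, h2, by rw [← e1, ← e2]; exact hQ⟩, hcyl⟩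
  · rintro ⟨⟨σ, ⟨h1, h2, hQ⟩, hcyl⟩, hx3⟩
    refine ⟨hx3, ?_⟩
    rw [mu_eq_indexOf hcyl h1, mu_eq_indexOf hcyl h2]
    exact hQ
/-! ### an `A`-computable characteristic function for the open code -/

lemma h_exists {fA : ℕ → ℕ} {A : Set ℕ} (hfA : TuringReducibleFun fA (chi A))
    (C : ℕ → ℕ → Prop) [DecidableRel C] (hC : PrimrecRel C) :
    ∃ h : ℕ → ℕ, TuringReducibleFun h (chi A) ∧ ∀ σ : List ℕ,
      (h (Encodable.encode σ) = 1 ↔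
        σ.idxOf 1 < σ.length ∧ σ.idxOf 2 < σ.length ∧
          C (fA (σ.idxOf 1)) (σ.idxOf 2)) := by
  classical
  set g1 : ℕ → ℕ := fun n => (Denumerable.ofNat (List ℕ) n).idxOf 1 with hg1def
  set g2 : ℕ → ℕ := fun n => Nat.pair ((Denumerable.ofNat (List ℕ) n).idxOf 2)
    (Nat.pair ((Denumerable.ofNat (List ℕ) n).idxOf 1)
      (Denumerable.ofNat (List ℕ) n).length) with hg2def
  set F : ℕ → ℕ := fun m =>
    if m.unpair.2.unpair.2.unpair.1 < m.unpair.2.unpair.2.unpair.2 ∧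
        m.unpair.2.unpair.1 < m.unpair.2.unpair.2.unpair.2 ∧
        C m.unpair.1 m.unpair.2.unpair.1 then 1 else 0 with hFdef
  have hof : Primrec (Denumerable.ofNat (List ℕ)) := Primrec.ofNat _
  have hg1 : Computable g1 :=
    (Primrec.list_idxOf.comp (Primrec.const 1) hof).to_comp
  have hg2 : Computable g2 := by
    have hidx2 : Primrec fun n => (Denumerable.ofNat (List ℕ) n).idxOf 2 :=
      Primrec.list_idxOf.comp (Primrec.const 2) hof
    have hidx1 : Primrec fun n => (Denumerable.ofNat (List ℕ) n).idxOf 1 :=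
      Primrec.list_idxOf.comp (Primrec.const 1) hof
    have hlen : Primrec fun n => (Denumerable.ofNat (List ℕ) n).length :=
      Primrec.list_length.comp hof
    exact (Primrec₂.natPair.comp hidx2 (Primrec₂.natPair.comp hidx1 hlen)).to_comp
  have hF : Computable F := by
    have pa : Primrec fun m : ℕ => m.unpair.1 := Primrec.fst.comp Primrec.unpair
    have p2 : Primrec fun m : ℕ => m.unpair.2 := Primrec.snd.comp Primrec.unpair
    have pidx2 : Primrec fun m : ℕ => m.unpair.2.unpair.1 :=
      Primrec.fst.comp (Primrec.unpair.comp p2)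
    have prest : Primrec fun m : ℕ => m.unpair.2.unpair.2 :=
      Primrec.snd.comp (Primrec.unpair.comp p2)
    have pidx1 : Primrec fun m : ℕ => m.unpair.2.unpair.2.unpair.1 :=
      Primrec.fst.comp (Primrec.unpair.comp prest)
    have plen : Primrec fun m : ℕ => m.unpair.2.unpair.2.unpair.2 :=
      Primrec.snd.comp (Primrec.unpair.comp prest)
    exact (Primrec.ite
      ((Primrec.nat_lt.comp pidx1 plen).and
        ((Primrec.nat_lt.comp pidx2 plen).and (hC.comp pa pidx2)))
      (Primrec.const 1) (Primrec.const 0)).to_comp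
  refine ⟨fun n => F (Nat.pair (fA (g1 n)) (g2 n)), TR_build hfA hg1 hg2 hF, ?_⟩
  intro σ
  simp only [hFdef, hg1def, hg2def, Denumerable.ofNat_encode, Nat.unpair_pair]
  split_ifs with hcond
  · simpa using hcond
  · simpa using hcond
/-- coding into the Dual Ramsey Theorem via a self-modulus. -/
theorem stmt8 (A : Set ℕ) (fA : ℕ → ℕ) (hmono : StrictMono fA)
    (hAf : TuringReducibleFun (chi A) fA) (hfA : TuringReducibleFun fA (chi A))
    (hdom : ∀ g : ℕ → ℕ, (∀ᶠ n in Filter.atTop, fA n ≤ g n) → TuringReducibleFun (chi A) g) :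
    -- (a) R and its complement are open, with A-computable open codes
    ((∃ W : Set (List ℕ),
        (∃ h : ℕ → ℕ, TuringReducibleFun h (chi A) ∧
          ∀ σ : List ℕ, σ ∈ W ↔ h (Encodable.encode σ) = 1) ∧
        Rset fA = OpenFrom W ∩ OmegaPart 3) ∧
     (∃ W : Set (List ℕ),
        (∃ h : ℕ → ℕ, TuringReducibleFun h (chi A) ∧
          ∀ σ : List ℕ, σ ∈ W ↔ h (Encodable.encode σ) = 1) ∧
        OmegaPart 3 \ Rset fA = OpenFrom W ∩ OmegaPart 3)) ∧
    -- (b) homogeneity must be on the R side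
    (∀ p ∈ OmegaPartInf,
      (Coarsenings p 3 ⊆ Rset fA ∨ Coarsenings p 3 ⊆ OmegaPart 3 \ Rset fA) →
      Coarsenings p 3 ⊆ Rset fA) ∧
    -- (c) every homogeneous partition computes A
    (∀ p ∈ OmegaPartInf,
      (Coarsenings p 3 ⊆ Rset fA ∨ Coarsenings p 3 ⊆ OmegaPart 3 \ Rset fA) →
      TuringReducibleFun (chi A) p) := by
  classical
  refine ⟨⟨?_, ?_⟩, ?_, ?_⟩
  · -- (a) R side
    obtain ⟨h, hTR, hiff⟩ := h_exists hfA (· ≤ ·) Primrec.nat_le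
    refine ⟨{σ | h (Encodable.encode σ) = 1}, ⟨h, hTR, fun _ => Iff.rfl⟩, ?_⟩
    have hWeq : {σ : List ℕ | h (Encodable.encode σ) = 1} =
        {σ : List ℕ | σ.idxOf 1 < σ.length ∧ σ.idxOf 2 < σ.length ∧
          fA (σ.idxOf 1) ≤ σ.idxOf 2} := Set.ext hiff
    rw [hWeq, ← open_char (fun u v => fA u ≤ v)]
    rfl
  · -- (a) complement side
    obtain ⟨h, hTR, hiff⟩ := h_exists hfA (fun a b => b < a) Primrec.nat_lt.swap
    refine ⟨{σ | h (Encodable.encode σ) = 1}, ⟨h, hTR, fun _ => Iff.rfl⟩, ?_⟩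
    have hWeq : {σ : List ℕ | h (Encodable.encode σ) = 1} =
        {σ : List ℕ | σ.idxOf 1 < σ.length ∧ σ.idxOf 2 < σ.length ∧
          σ.idxOf 2 < fA (σ.idxOf 1)} := Set.ext hiff
    rw [hWeq, ← open_char (fun u v => v < fA u)]
    ext x
    simp only [Set.mem_diff, Rset, Set.mem_sep_iff, Set.mem_setOf_eq, not_and, not_le]
    constructor
    · rintro ⟨h3, hn⟩; exact ⟨h3, hn h3⟩
    · rintro ⟨h3, hn⟩; exact ⟨h3, fun _ => hn⟩
  · -- (b)
    exact fun p hp hom => homog_R hp hom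
  · -- (c)
    intro p hp hom
    have hR := homog_R hp hom
    exact TR_trans
      (hdom (fun n => mu p (n + 2)) (Filter.Eventually.of_forall (dominates hmono hp hR)))
      (mu_code hp.2)
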